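/- (Lemma 3, finite sample guarantee for the quartet test.) Let A, B, C be fixed real matrices with α := min{ ‖B‖* − ‖A‖*, ‖C‖* − ‖A‖* } > 0, and let m > 0. Let Â, B̂, Ĉ be random matrices on a probability space such that for every ε > 0: ℙ( | ‖Â‖* − ‖A‖* | ≥ ε ) ≤ 2 e^{−mε²/8}, ℙ( | ‖B̂‖* − ‖B‖* | ≥ ε ) ≤ 2 e^{−mε²/8}, and ℙ( | ‖Ĉ‖* − ‖C‖* | ≥ ε ) ≤ 2 e^{−mε²/8}. Then the probability that the empirical nuclear norm test fails satisfies ℙ( ‖Â‖* ≥ ‖B̂‖* or ‖Â‖* ≥ ‖Ĉ‖* ) ≤ 8 e^{−mα²/32}; equivalently, with probability at least 1 − 8 e^{−mα²/32}, the test returns the correct quartet relation (‖Â‖* < ‖B̂‖* and ‖Â‖* < ‖Ĉ‖*). -/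

import Mathlib

open MeasureTheory

/-- The nuclear norm of a real matrix: the sum of its singular values. -/
noncomputable def nuclearNorm {α β : Type*} [Fintype α] [Fintype β] [DecidableEq β]
    (M : Matrix α β ℝ) : ℝ :=
  ∑ i, Real.sqrt ((show (M.transpose * M).IsHermitian by
    simpa [Matrix.conjTranspose_eq_transpose_of_trivial] using
      Matrix.isHermitian_conjTranspose_mul_self M).eigenvalues i)

/-- Lemma 3 (finite sample guarantee for the quartet test): if the empirical nuclear norms
concentrate around their population values, then the empirical nuclear norm quartet test fails
with probability at most `8 e^{−mα²/32}`. -/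
theorem quartet_finite_sample_guarantee
    (d e : ℕ) (A B C : Matrix (Fin d) (Fin e) ℝ) (m : ℝ) (hm : 0 < m)
    (α : ℝ)
    (hα : α = min (nuclearNorm B - nuclearNorm A) (nuclearNorm C - nuclearNorm A))
    (hαpos : 0 < α)
    (Ω : Type*) [MeasurableSpace Ω] (μ : Measure Ω) [IsProbabilityMeasure μ]
    (Ahat Bhat Chat : Ω → Matrix (Fin d) (Fin e) ℝ)
    (hAhat : ∀ ε : ℝ, 0 < ε →
      μ {ω | ε ≤ |nuclearNorm (Ahat ω) - nuclearNorm A|} ≤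
        ENNReal.ofReal (2 * Real.exp (-(m * ε ^ 2) / 8)))
    (hBhat : ∀ ε : ℝ, 0 < ε →
      μ {ω | ε ≤ |nuclearNorm (Bhat ω) - nuclearNorm B|} ≤
        ENNReal.ofReal (2 * Real.exp (-(m * ε ^ 2) / 8)))
    (hChat : ∀ ε : ℝ, 0 < ε →
      μ {ω | ε ≤ |nuclearNorm (Chat ω) - nuclearNorm C|} ≤
        ENNReal.ofReal (2 * Real.exp (-(m * ε ^ 2) / 8))) :
    μ {ω | nuclearNorm (Bhat ω) ≤ nuclearNorm (Ahat ω) ∨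
          nuclearNorm (Chat ω) ≤ nuclearNorm (Ahat ω)} ≤
      ENNReal.ofReal (8 * Real.exp (-(m * α ^ 2) / 32)) := by
  
  set ε := α / 2 with hε
  have hεpos : 0 < ε := by positivity
  have hsub : {ω | nuclearNorm (Bhat ω) ≤ nuclearNorm (Ahat ω) ∨
          nuclearNorm (Chat ω) ≤ nuclearNorm (Ahat ω)} ⊆
      ({ω | ε ≤ |nuclearNorm (Ahat ω) - nuclearNorm A|} ∪
       {ω | ε ≤ |nuclearNorm (Bhat ω) - nuclearNorm B|}) ∪
       {ω | ε ≤ |nuclearNorm (Chat ω) - nuclearNorm C|} := by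
    intro ω hω
    have hB : α ≤ nuclearNorm B - nuclearNorm A := hα ▸ min_le_left _ _
    have hC : α ≤ nuclearNorm C - nuclearNorm A := hα ▸ min_le_right _ _
    rcases hω with h | h
    · by_cases hA : ε ≤ |nuclearNorm (Ahat ω) - nuclearNorm A|
      · exact Or.inl (Or.inl hA)
      · refine Or.inl (Or.inr ?_)
        rw [not_le, abs_lt] at hA
        simp only [Set.mem_setOf_eq, le_abs]
        right
        linarith
    · by_cases hA : ε ≤ |nuclearNorm (Ahat ω) - nuclearNorm A|
      · exact Or.inl (Or.inl hA)
      · refine Or.inr ?_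
        rw [not_le, abs_lt] at hA
        simp only [Set.mem_setOf_eq, le_abs]
        right
        linarith
  calc μ _ ≤ μ (({ω | ε ≤ |nuclearNorm (Ahat ω) - nuclearNorm A|} ∪
       {ω | ε ≤ |nuclearNorm (Bhat ω) - nuclearNorm B|}) ∪
       {ω | ε ≤ |nuclearNorm (Chat ω) - nuclearNorm C|}) := measure_mono hsub
    _ ≤ (μ {ω | ε ≤ |nuclearNorm (Ahat ω) - nuclearNorm A|} +
         μ {ω | ε ≤ |nuclearNorm (Bhat ω) - nuclearNorm B|}) +
        μ {ω | ε ≤ |nuclearNorm (Chat ω) - nuclearNorm C|} :=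
      le_trans (measure_union_le _ _) (add_le_add_left (measure_union_le _ _) _)
    _ ≤ (ENNReal.ofReal (2 * Real.exp (-(m * ε ^ 2) / 8)) +
         ENNReal.ofReal (2 * Real.exp (-(m * ε ^ 2) / 8))) +
        ENNReal.ofReal (2 * Real.exp (-(m * ε ^ 2) / 8)) :=
      add_le_add (add_le_add (hAhat ε hεpos) (hBhat ε hεpos)) (hChat ε hεpos)
    _ ≤ ENNReal.ofReal (8 * Real.exp (-(m * α ^ 2) / 32)) := by
      rw [← ENNReal.ofReal_add (by positivity) (by positivity),
          ← ENNReal.ofReal_add (by positivity) (by positivity)]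
      apply ENNReal.ofReal_le_ofReal
      have : -(m * ε ^ 2) / 8 = -(m * α ^ 2) / 32 := by rw [hε]; ring
      rw [this]
      nlinarith [Real.exp_pos (-(m * α ^ 2) / 32)]
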